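/- Consider the multiplicative weights algorithm with N experts: weights w_{i,1} = 1, and w_{i,k+1} = (1 + ℓ·u_{i,k}) w_{i,k}, where u_{i,k} ∈ [-1,1] is the reward of expert i in round k and 0 < ℓ ≤ 1/2. Let Q_k be the normalized weight distribution and V_K = ∑_{k=1}^K ∑_i Q_k(i) u_{i,k}. Then for every expert j: V_K ≥ ∑_{k=1}^K u_{j,k} − ℓ ∑_{k=1}^K |u_{j,k}| − (ln N)/ℓ. -/

import Mathlib

lemma log_lb_aux {x : ℝ} (h1 : -(1/2) ≤ x) (h2 : x ≤ 1/2) :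
    x - x^2 ≤ Real.log (1 + x) := by
  have hx1 : (0:ℝ) < 1 + x := by linarith
  rw [Real.le_log_iff_exp_le hx1]
  rcases le_or_gt 0 x with hx0 | hx0
  · -- x ≥ 0 : exp t ≤ 1/(1-t), t = x - x^2
    have hA := Real.add_one_le_exp (-(x - x^2))
    have hB : Real.exp (x - x^2) * Real.exp (-(x - x^2)) = 1 := by
      rw [← Real.exp_add]; simp
    have hpos := Real.exp_pos (x - x^2)
    nlinarith [mul_le_mul_of_nonneg_left hA hpos.le, sq_nonneg x, sq_nonneg (x - x^2),
      mul_nonneg (mul_nonneg hx0 hx0) hx0]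
  · -- x < 0 : use exp s ≥ 1 + s + s^2/2 with s = x^2 - x ≥ 0
    have hs : (0:ℝ) ≤ x^2 - x := by nlinarith
    have hq := Real.quadratic_le_exp_of_nonneg hs
    have hB : Real.exp (x - x^2) * Real.exp (x^2 - x) = 1 := by
      rw [← Real.exp_add]; ring_nf; exact Real.exp_zero
    have hpos := Real.exp_pos (x^2 - x)
    -- (1+x)*(1 + s + s^2/2) ≥ 1 for x ∈ [-1/2, 0]
    have hpoly : (1:ℝ) ≤ (1 + x) * (1 + (x^2 - x) + (x^2 - x)^2/2) := by nlinarith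
    have := mul_le_mul_of_nonneg_left hq hx1.le
    nlinarith [mul_pos hpos (Real.exp_pos (x - x^2))]

theorem stmt9 (N : ℕ) (hN : 1 ≤ N) (ℓ : ℝ) (hℓ0 : 0 < ℓ) (hℓ : ℓ ≤ 1 / 2)
    (u : ℕ → Fin N → ℝ) (hu : ∀ k i, u k i ∈ Set.Icc (-1 : ℝ) 1)
    (w : ℕ → Fin N → ℝ)
    (hw0 : ∀ i, w 0 i = 1)
    (hwsucc : ∀ k i, w (k + 1) i = (1 + ℓ * u k i) * w k i)
    (Q : ℕ → Fin N → ℝ) (hQ : ∀ k i, Q k i = w k i / ∑ j, w k j)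
    (K : ℕ) (j : Fin N) :
    (∑ k ∈ Finset.range K, ∑ i, Q k i * u k i) ≥
      (∑ k ∈ Finset.range K, u k j) - ℓ * (∑ k ∈ Finset.range K, |u k j|)
        - Real.log N / ℓ := by
  have hupos : ∀ k i, (0:ℝ) < 1 + ℓ * u k i := by
    intro k i
    have h := hu k i
    have h1 := h.1; have h2 := h.2
    nlinarith
  have hwpos : ∀ k i, 0 < w k i := by
    intro k
    induction k with
    | zero => intro i; rw [hw0]; norm_num
    | succ n ih => intro i; rw [hwsucc]; exact mul_pos (hupos n i) (ih i)
  set W : ℕ → ℝ := fun k => ∑ i, w k i with hW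
  have hNe : (Finset.univ : Finset (Fin N)).Nonempty := by
    simpa [Finset.univ_nonempty_iff] using Fin.pos_iff_nonempty.mp (by omega)
  have hWpos : ∀ k, 0 < W k := fun k => Finset.sum_pos (fun i _ => hwpos k i) hNe
  set v : ℕ → ℝ := fun k => ∑ i, Q k i * u k i with hv
  have hstep : ∀ k, W (k+1) = W k * (1 + ℓ * v k) := by
    intro k
    have h1 : v k = (∑ i, u k i * w k i) / W k := by
      rw [hv]
      rw [Finset.sum_div]
      apply Finset.sum_congr rfl
      intro i _
      rw [hQ]
      ring
    have h2 : W (k+1) = W k + ℓ * ∑ i, u k i * w k i := by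
      show (∑ i, w (k+1) i) = _
      simp only [hwsucc]
      rw [Finset.mul_sum, ← Finset.sum_add_distrib]
      apply Finset.sum_congr rfl
      intro i _
      ring
    have h3 : W k * v k = ∑ i, u k i * w k i := by
      rw [h1, mul_div_cancel₀ _ (hWpos k).ne']
    calc W (k+1) = W k + ℓ * ∑ i, u k i * w k i := h2
      _ = W k + ℓ * (W k * v k) := by rw [h3]
      _ = W k * (1 + ℓ * v k) := by ring
  have hvpos : ∀ k, 0 < 1 + ℓ * v k := by
    intro k
    have := hstep k
    have h1 := hWpos k
    have h2 := hWpos (k+1)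
    nlinarith
  -- upper bound on log W K
  have hup : ∀ K, Real.log (W K) ≤ Real.log N + ℓ * ∑ k ∈ Finset.range K, v k := by
    intro K
    induction K with
    | zero =>
      simp only [Finset.range_zero, Finset.sum_empty, mul_zero, add_zero]
      have : W 0 = N := by
        show (∑ i : Fin N, w 0 i) = N
        simp [hw0]
      rw [this]
    | succ n ih =>
      rw [hstep n, Real.log_mul (hWpos n).ne' (hvpos n).ne', Finset.sum_range_succ]
      have hlog : Real.log (1 + ℓ * v n) ≤ ℓ * v n := by
        have := Real.log_le_sub_one_of_pos (hvpos n)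
        linarith
      linarith
  -- lower bound on log w K j
  have hdown : ∀ K, ℓ * (∑ k ∈ Finset.range K, u k j) - ℓ^2 * (∑ k ∈ Finset.range K, |u k j|)
      ≤ Real.log (w K j) := by
    intro K
    induction K with
    | zero => simp [hw0]
    | succ n ih =>
      rw [hwsucc, Real.log_mul (hupos n j).ne' (hwpos n j).ne',
        Finset.sum_range_succ, Finset.sum_range_succ]
      have hb := hu n j
      have habs : |ℓ * u n j| ≤ 1/2 := by
        rw [abs_mul, abs_of_pos hℓ0]
        have : |u n j| ≤ 1 := abs_le.mpr ⟨hb.1, hb.2⟩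
        nlinarith
      have hlb := log_lb_aux (neg_le_of_abs_le habs) (le_of_abs_le habs)
      have hsq : (ℓ * u n j)^2 ≤ ℓ^2 * |u n j| := by
        have h1 : |u n j| ≤ 1 := abs_le.mpr ⟨hb.1, hb.2⟩
        have h3 : u n j ^ 2 ≤ |u n j| := by
          nlinarith [abs_nonneg (u n j), sq_abs (u n j)]
        calc (ℓ * u n j)^2 = ℓ^2 * (u n j ^ 2) := by ring
          _ ≤ ℓ^2 * |u n j| := mul_le_mul_of_nonneg_left h3 (sq_nonneg ℓ)
      have : ℓ * u n j - ℓ^2 * |u n j| ≤ Real.log (1 + ℓ * u n j) := by nlinarith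
      linarith
  have hwle : Real.log (w K j) ≤ Real.log (W K) := by
    apply Real.log_le_log (hwpos K j)
    exact Finset.single_le_sum (fun i _ => (hwpos K i).le) (Finset.mem_univ j)
  have hmain : ℓ * (∑ k ∈ Finset.range K, u k j) - ℓ^2 * (∑ k ∈ Finset.range K, |u k j|)
      ≤ Real.log N + ℓ * ∑ k ∈ Finset.range K, v k := le_trans (le_trans (hdown K) hwle) (hup K)
  rw [ge_iff_le, ← mul_le_mul_iff_right₀ hℓ0]
  have hcancel : ℓ * (Real.log N / ℓ) = Real.log N := by field_simp
  calc ℓ * ((∑ k ∈ Finset.range K, u k j) - ℓ * (∑ k ∈ Finset.range K, |u k j|)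
        - Real.log N / ℓ)
      = ℓ * (∑ k ∈ Finset.range K, u k j) - ℓ^2 * (∑ k ∈ Finset.range K, |u k j|)
        - ℓ * (Real.log N / ℓ) := by ring
    _ ≤ ℓ * ∑ k ∈ Finset.range K, v k := by rw [hcancel]; linarith
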